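/- Let a, a′, λ ∈ ℂ be nonzero and x₀, x₁ ∈ ℂ. If a·(1 + x₀·ε)·(𝐣 + I·𝐤) = λ·conj(a′·(1 + x₁·ε)·(𝐣 + I·𝐤)) in the ℂ-dual quaternions, where conj denotes quaternion conjugation applied to both the primal and the dual part, then x₀ = x₁. -/

import Mathlib

open Quaternion TrivSqZeroExt DualNumber

noncomputable section

/-- The ℂ-dual quaternions. -/
abbrev DQ : Type := DualNumber (Quaternion ℂ)

/-- The quaternion unit 𝐣, viewed as a dual quaternion. -/
def qj : DQ := inl (⟨0,0,1,0⟩ : ℍ[ℂ])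
/-- The quaternion unit 𝐤, viewed as a dual quaternion. -/
def qk : DQ := inl (⟨0,0,0,1⟩ : ℍ[ℂ])

/-- A complex scalar, viewed as a dual quaternion. -/
def cs (a : ℂ) : DQ := inl (algebraMap ℂ ℍ[ℂ] a)

/-- Quaternion conjugation of a dual quaternion, applied to both
the primal and dual part. -/
def dconj (q : DQ) : DQ := inl (star (fst q)) + inr (star (snd q))


def uu : ℍ[ℂ] := ⟨0,0,1,Complex.I⟩

lemma L1 : qj + cs Complex.I * qk = inl uu := by
  erw [qj, qk, cs, inl_mul_inl (R := ℍ[ℂ]) (M := ℍ[ℂ]), ← inl_add]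
  congr 1
  ext
  · erw [QuaternionAlgebra.re_add, QuaternionAlgebra.re_mul]; simp [Quaternion.algebraMap_def, uu]
  · erw [QuaternionAlgebra.imI_add, QuaternionAlgebra.imI_mul]; simp [Quaternion.algebraMap_def, uu]
  · erw [QuaternionAlgebra.imJ_add, QuaternionAlgebra.imJ_mul]; simp [Quaternion.algebraMap_def, uu]
  · erw [QuaternionAlgebra.imK_add, QuaternionAlgebra.imK_mul]; simp [Quaternion.algebraMap_def, uu]

lemma L2 (a x : ℂ) : cs a * (1 + cs x * ε) * inl uu =
    inl (algebraMap ℂ ℍ[ℂ] a * uu) + inr (algebraMap ℂ ℍ[ℂ] a * algebraMap ℂ ℍ[ℂ] x * uu) := by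
  rw [cs, cs, DualNumber.eps, mul_add, mul_one, add_mul,
    inl_mul_inl (R := ℍ[ℂ]) (M := ℍ[ℂ]),
    mul_assoc, inl_mul_inr (R := ℍ[ℂ]) (M := ℍ[ℂ]),
    inr_mul_inl (R := ℍ[ℂ]) (M := ℍ[ℂ]),
    inl_mul_inr (R := ℍ[ℂ]) (M := ℍ[ℂ])]
  congr 2
  simp only [smul_eq_mul, op_smul_eq_mul, mul_one, mul_assoc]

lemma L3 (p q : ℍ[ℂ]) : dconj (inl p + inr q) = inl (star p) + inr (star q) := by
  rw [dconj]
  congr 1 <;> congr 1 <;>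
    simp [fst_add (R := ℍ[ℂ]) (M := ℍ[ℂ]), snd_add (R := ℍ[ℂ]) (M := ℍ[ℂ])]

lemma L4 (l p q : ℍ[ℂ]) : (inl l : DQ) * (inl p + inr q) = inl (l * p) + inr (l * q) := by
  rw [mul_add, inl_mul_inl (R := ℍ[ℂ]) (M := ℍ[ℂ]), inl_mul_inr (R := ℍ[ℂ]) (M := ℍ[ℂ]),
    smul_eq_mul]

lemma L5 (p q p' q' : ℍ[ℂ]) (h : (inl p : DQ) + inr q = inl p' + inr q') : p = p' ∧ q = q' := by
  constructor
  · have := congrArg (fst (R := ℍ[ℂ]) (M := ℍ[ℂ])) h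
    simpa using this
  · have := congrArg (snd (R := ℍ[ℂ]) (M := ℍ[ℂ])) h
    simpa using this

/-- If `a(1 + x₀ε)(𝐣 + I𝐤)` is a nonzero scalar multiple of the quaternion
conjugate of `a′(1 + x₁ε)(𝐣 + I𝐤)`, then `x₀ = x₁`. -/
theorem proj_equiv_conj_implies_equal_roots
    (a a' lam x₀ x₁ : ℂ) (ha : a ≠ 0) (ha' : a' ≠ 0) (hlam : lam ≠ 0)
    (h : cs a * (1 + cs x₀ * ε) * (qj + cs Complex.I * qk) =
      cs lam * dconj (cs a' * (1 + cs x₁ * ε) * (qj + cs Complex.I * qk))) :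
    x₀ = x₁ := by
  rw [L1, L2, L2, L3] at h
  simp only [cs] at h
  rw [L4] at h
  obtain ⟨hA, hB⟩ := L5 _ _ _ _ h
  have hAj := congrArg QuaternionAlgebra.imJ hA
  have hBj := congrArg QuaternionAlgebra.imJ hB
  simp [uu, Quaternion.algebraMap_def, Quaternion.coe_mul_eq_smul, Quaternion.imJ_mul] at hAj hBj
  erw [QuaternionAlgebra.imJ_mul, QuaternionAlgebra.imJ_mul] at hAj hBj
  simp at hAj hBj
  have key : a * x₀ = a * x₁ := by rw [hBj, hAj]; ring
  exact mul_left_cancel₀ ha key
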